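/- Let X be a set and let (F_X, ē) be as defined below; it realizes the pointed partially ordered abelian group E(X) presented by generators a_ξ (ξ ∈ X) and relations 0 ≤ a_ξ ≤ ē. Precisely: for every partially ordered abelian group G, every e ∈ G with e ≥ 0, and every family a : X → G with 0 ≤ a(ξ) ≤ e for all ξ, there exists a unique order-preserving group homomorphism f : F_X → G such that f(ē) = e and f(ā_ξ) = a(ξ) for all ξ ∈ X. -/

import Mathlib

/-- The constant function `1` on the powerset of `X`. -/
def eBar (X : Type*) : Set X → ℤ := fun _ => 1

/-- The characteristic function of `{Y ⊆ X : ξ ∈ Y}`. -/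
noncomputable def aBar {X : Type*} (ξ : X) : Set X → ℤ :=
  Set.indicator {Y : Set X | ξ ∈ Y} fun _ => 1

/-- The subgroup of `Set X → ℤ` generated by `ē` and the `ā_ξ`, ordered componentwise. -/
noncomputable def FX (X : Type*) : AddSubgroup (Set X → ℤ) :=
  AddSubgroup.closure ({eBar X} ∪ Set.range (aBar (X := X)))

/-- `ē` as an element of `F_X`. -/
noncomputable def eElem (X : Type*) : FX X :=
  ⟨eBar X, AddSubgroup.subset_closure (Set.mem_union_left _ rfl)⟩

/-- `ā_ξ` as an element of `F_X`. -/
noncomputable def aElem {X : Type*} (ξ : X) : FX X :=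
  ⟨aBar ξ, AddSubgroup.subset_closure (Set.mem_union_right _ ⟨ξ, rfl⟩)⟩

universe u v

/- ### Auxiliary development -/

open scoped Classical

namespace FXUniversal

variable {X : Type u}

lemma aBar_apply (ξ : X) (Y : Set X) : aBar ξ Y = if ξ ∈ Y then 1 else 0 := by
  simp [aBar, Set.indicator_apply]

/-- The generic linear combination `n • ē + ∑ c ξ • ā_ξ`. -/
noncomputable def combo (n : ℤ) (c : X →₀ ℤ) : Set X → ℤ :=
  n • eBar X + c.sum fun ξ k => k • aBar ξ

lemma combo_apply (n : ℤ) (c : X →₀ ℤ) (Y : Set X) :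
    combo n c Y = n + ∑ ξ ∈ c.support, (if ξ ∈ Y then c ξ else 0) := by
  simp only [combo, Pi.add_apply, Pi.smul_apply, eBar, smul_eq_mul, mul_one,
    Finsupp.sum, Finset.sum_apply, aBar_apply, mul_ite, mul_one, mul_zero]

lemma combo_empty (n : ℤ) (c : X →₀ ℤ) : combo n c ∅ = n := by
  simp [combo_apply]

lemma combo_singleton (n : ℤ) (c : X →₀ ℤ) (ξ₀ : X) : combo n c {ξ₀} = n + c ξ₀ := by
  rw [combo_apply]
  congr 1
  simp only [Set.mem_singleton_iff]
  rw [Finset.sum_ite_eq' c.support ξ₀ c]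
  by_cases h : ξ₀ ∈ c.support
  · simp [h]
  · simp [h, Finsupp.notMem_support_iff.mp h]

lemma exists_combo {u : Set X → ℤ} (hu : u ∈ FX X) :
    ∃ n : ℤ, ∃ c : X →₀ ℤ, u = combo n c := by
  induction hu using AddSubgroup.closure_induction with
  | mem x hx =>
    rcases hx with hx | ⟨ξ, rfl⟩
    · exact ⟨1, 0, by simp [combo, hx.symm]⟩
    · refine ⟨0, Finsupp.single ξ 1, ?_⟩
      rw [combo, Finsupp.sum_single_index (by simp)]
      simp
  | zero => exact ⟨0, 0, by simp [combo]⟩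
  | add x y _ _ hx hy =>
    obtain ⟨n, c, rfl⟩ := hx
    obtain ⟨m, d, rfl⟩ := hy
    refine ⟨n + m, c + d, ?_⟩
    simp only [combo]
    rw [Finsupp.sum_add_index' (by simp) (fun ξ k l => add_smul k l (aBar ξ)), add_smul]
    abel
  | neg x _ hx =>
    obtain ⟨n, c, rfl⟩ := hx
    refine ⟨-n, -c, ?_⟩
    simp only [combo]
    rw [Finsupp.sum_neg_index (by simp), neg_smul]
    simp only [neg_smul, Finsupp.sum, Finset.sum_neg_distrib]
    abel

lemma combo_coeff_eq {n : ℤ} {c : X →₀ ℤ} {u : Set X → ℤ} (h : u = combo n c) :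
    n = u ∅ ∧ ∀ ξ, c ξ = u {ξ} - u ∅ := by
  subst h
  refine ⟨(combo_empty n c).symm, fun ξ => ?_⟩
  rw [combo_singleton, combo_empty]; ring

variable {G : Type v} [AddCommGroup G] [PartialOrder G] [IsOrderedAddMonoid G]

lemma zsmul_nonneg_of_nonpos_nonpos {k : ℤ} {x : G} (hk : k ≤ 0) (hx : x ≤ 0) :
    0 ≤ k • x := by
  have : 0 ≤ (-k) • (-x) := zsmul_nonneg (neg_nonneg.mpr hx) (neg_nonneg.mpr hk)
  simpa using this

lemma combo_nonneg_image (e : G) (he : 0 ≤ e) (a : X → G) (ha : ∀ ξ, 0 ≤ a ξ ∧ a ξ ≤ e)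
    (n : ℤ) (c : X →₀ ℤ) (h : ∀ Y, 0 ≤ combo n c Y) :
    0 ≤ n • e + c.sum fun ξ k => k • a ξ := by
  classical
  set N : Finset X := c.support.filter (fun ξ => c ξ < 0) with hN
  have key : 0 ≤ n + ∑ ξ ∈ N, c ξ := by
    have := h (↑N : Set X)
    rw [combo_apply] at this
    have hNs : c.support ∩ N = N :=
      Finset.inter_eq_right.mpr (by rw [hN]; exact Finset.filter_subset _ _)
    simpa [hNs] using this
  have step : ∀ ξ ∈ c.support, (if c ξ < 0 then c ξ • e else 0) ≤ c ξ • a ξ := by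
    intro ξ _
    by_cases hc : c ξ < 0
    · rw [if_pos hc]
      have : 0 ≤ c ξ • (a ξ - e) :=
        zsmul_nonneg_of_nonpos_nonpos hc.le (sub_nonpos.mpr (ha ξ).2)
      rw [smul_sub] at this
      exact sub_nonneg.mp this
    · rw [if_neg hc]
      exact zsmul_nonneg (ha ξ).1 (not_lt.mp hc)
  have hsum : (∑ ξ ∈ c.support, if c ξ < 0 then c ξ • e else 0)
      ≤ c.sum fun ξ k => k • a ξ := Finset.sum_le_sum step
  have heq : (∑ ξ ∈ c.support, if c ξ < 0 then c ξ • e else 0)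
      = (∑ ξ ∈ N, c ξ) • e := by
    rw [hN, ← Finset.sum_filter, Finset.sum_smul]
  calc 0 ≤ (n + ∑ ξ ∈ N, c ξ) • e := zsmul_nonneg he key
    _ = n • e + (∑ ξ ∈ N, c ξ) • e := add_smul _ _ _
    _ ≤ n • e + c.sum fun ξ k => k • a ξ := by rw [← heq]; exact add_le_add_right hsum _

lemma combo_add (n m : ℤ) (c d : X →₀ ℤ) :
    combo n c + combo m d = combo (n + m) (c + d) := by
  simp only [combo]
  rw [Finsupp.sum_add_index' (by simp) (fun ξ k l => add_smul k l (aBar ξ)), add_smul]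
  abel

noncomputable def coeff (u : FX X) : X →₀ ℤ :=
  (exists_combo u.2).choose_spec.choose

lemma coeff_spec (u : FX X) :
    (u : Set X → ℤ) = combo ((u : Set X → ℤ) ∅) (coeff u) := by
  have h := (exists_combo u.2).choose_spec.choose_spec
  obtain ⟨hn, -⟩ := combo_coeff_eq h
  rw [← hn]; exact h

noncomputable def fraw (e : G) (a : X → G) (u : FX X) : G :=
  ((u : Set X → ℤ) ∅) • e + (coeff u).sum fun ξ k => k • a ξ

lemma fraw_combo (e : G) (a : X → G) {u : FX X} {n : ℤ} {c : X →₀ ℤ}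
    (h : (u : Set X → ℤ) = combo n c) :
    fraw e a u = n • e + c.sum fun ξ k => k • a ξ := by
  obtain ⟨hn, hc⟩ := combo_coeff_eq h
  obtain ⟨-, hc'⟩ := combo_coeff_eq (coeff_spec u)
  have : c = coeff u := Finsupp.ext fun ξ => by rw [hc, hc']
  rw [fraw, ← this, hn]

lemma fraw_add (e : G) (a : X → G) (u v : FX X) :
    fraw e a (u + v) = fraw e a u + fraw e a v := by
  have hu := coeff_spec u
  have hv := coeff_spec v
  have huv : ((u + v : FX X) : Set X → ℤ) = combo ((u : Set X → ℤ) ∅ + (v : Set X → ℤ) ∅)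
      (coeff u + coeff v) := by
    rw [← combo_add]
    push_cast
    rw [← hu, ← hv]
  rw [fraw_combo e a huv, fraw_combo e a hu, fraw_combo e a hv,
    Finsupp.sum_add_index' (by simp) (fun ξ k l => add_smul k l (a ξ)), add_smul]
  abel

end FXUniversal

open FXUniversal in
/-- **Universal property of `F_X = E(X)`.** For every partially ordered abelian group `G`,
every `e ≥ 0` in `G` and every family `a : X → G` with `0 ≤ a(ξ) ≤ e`, there is a unique
order-preserving group homomorphism `f : F_X → G` with `f(ē) = e` and `f(ā_ξ) = a(ξ)`. -/
theorem FX_universal_property {X : Type u} {G : Type v} [AddCommGroup G] [PartialOrder G] [IsOrderedAddMonoid G]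
    (e : G) (he : 0 ≤ e) (a : X → G) (ha : ∀ ξ, 0 ≤ a ξ ∧ a ξ ≤ e) :
    ∃! f : FX X →+ G, Monotone f ∧ f (eElem X) = e ∧ ∀ ξ, f (aElem ξ) = a ξ := by
  classical
  refine ⟨AddMonoidHom.mk' (fraw e a) (fraw_add e a), ⟨?_, ?_, ?_⟩, ?_⟩
  · -- Monotone
    intro u v huv
    have h0 : ∀ w : FX X, 0 ≤ w → 0 ≤ fraw e a w := by
      intro w hw
      rw [fraw]
      refine combo_nonneg_image e he a ha _ _ (fun Y => ?_)
      rw [← coeff_spec w]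
      exact hw Y
    have := h0 (v - u) (by simpa using sub_nonneg.mpr huv)
    have hsub : fraw e a (v - u) = fraw e a v - fraw e a u := by
      have := fraw_add e a (v - u) u
      simp only [sub_add_cancel] at this
      rw [this]; abel
    rw [hsub] at this
    simpa using sub_nonneg.mp this
  · -- f eElem = e
    have h : ((eElem X : FX X) : Set X → ℤ) = combo 1 0 := by
      simp [eElem, combo]
    simp [AddMonoidHom.mk'_apply, fraw_combo e a h]
  · -- f aElem = a ξ
    intro ξ
    have h : ((aElem ξ : FX X) : Set X → ℤ) = combo 0 (Finsupp.single ξ 1) := by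
      rw [combo, Finsupp.sum_single_index (by simp)]
      simp [aElem]
    rw [AddMonoidHom.mk'_apply, fraw_combo e a h,
      Finsupp.sum_single_index (by simp)]
    simp
  · -- uniqueness
    intro g ⟨_, hge, hga⟩
    ext u
    obtain ⟨n, c, hu⟩ := exists_combo u.2
    have hu' : u = n • eElem X + ∑ ξ ∈ c.support, c ξ • aElem ξ := by
      apply Subtype.ext
      push_cast
      rw [hu, combo, Finsupp.sum]
      rfl
    rw [AddMonoidHom.mk'_apply, fraw_combo e a hu, hu']
    rw [map_add, map_zsmul, hge, map_sum]
    simp only [map_zsmul, hga]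
    rw [Finsupp.sum]
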